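/- Let r ≥ 1, n : Fin r → ℕ, α : Fin r → ℝ, β ∈ ℝ, with the n_j + α_j pairwise distinct, and suppose |n| + n_j + α_j + β ≠ 0 for all j and q, Q as before. If δ = −(|n| + β)·q(−|n|−β)/Q(−|n|−β) + β, then δ = −∑_{j=1}^r [(n_j + α_j)·q(n_j+α_j)/Q'(n_j+α_j)] / (|n| + n_j + α_j + β). -/

import Mathlib

open Polynomial Finset

theorem stmt_13 (r : ℕ) (hr : 1 ≤ r) (n : Fin r → ℕ) (α : Fin r → ℝ) (β : ℝ)
    (hd : Function.Injective (fun j : Fin r => (n j : ℝ) + α j))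
    (q Q : Polynomial ℝ)
    (hq : q = ∏ j : Fin r, (X - C (α j)))
    (hQ : Q = ∏ j : Fin r, (X - C ((n j : ℝ) + α j)))
    (hroot : ∀ j, -(∑ i : Fin r, (n i : ℝ)) - β ≠ (n j : ℝ) + α j)
    (hden : ∀ j, (∑ i : Fin r, (n i : ℝ)) + (n j : ℝ) + α j + β ≠ 0)
    (δ : ℝ)
    (hδ : δ = -((∑ i : Fin r, (n i : ℝ)) + β)
        * q.eval (-(∑ i : Fin r, (n i : ℝ)) - β)
        / Q.eval (-(∑ i : Fin r, (n i : ℝ)) - β) + β) :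
    δ = -∑ j : Fin r,
          ((n j : ℝ) + α j) * q.eval ((n j : ℝ) + α j)
            / Q.derivative.eval ((n j : ℝ) + α j)
            / ((∑ i : Fin r, (n i : ℝ)) + (n j : ℝ) + α j + β) := by
  classical
  set S : ℝ := ∑ i : Fin r, (n i : ℝ) with hS
  set x : Fin r → ℝ := fun j => (n j : ℝ) + α j with hx
  set z : ℝ := -S - β with hz
  have hxj : ∀ j, (n j : ℝ) + α j = x j := fun j => by rw [hx]
  simp only [hxj] at hroot hQ ⊢
  have hroot' : ∀ j, z ≠ x j := hroot
  have hinj : Set.InjOn x (Finset.univ : Finset (Fin r)) := fun a _ b _ h => hd h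
  have hd2 : ∀ i, S + x i + β ≠ 0 := fun i h => hden i (by simp only [hx] at h; linarith)
  have hQn : Q = Lagrange.nodal Finset.univ x := by rw [hQ, Lagrange.nodal]
  have hQz : Q.eval z ≠ 0 := by
    rw [hQn]; exact Lagrange.eval_nodal_not_at_node (fun i _ => hroot' i)
  have hw' : ∀ j, (Lagrange.nodalWeight Finset.univ x j)⁻¹ = Q.derivative.eval (x j) :=
    fun j => by
      rw [Lagrange.nodalWeight_eq_eval_derivative_nodal (Finset.mem_univ j), inv_inv, hQn]
  have hcard : #(Finset.univ : Finset (Fin r)) = r := by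
    rw [Finset.card_univ, Fintype.card_fin]
  have hpos : 0 < #(Finset.univ : Finset (Fin r)) := by rw [hcard]; omega
  -- q - Q has degree < r
  have hqm : q.Monic := hq ▸ monic_prod_of_monic _ _ fun i _ => monic_X_sub_C _
  have hQm : Q.Monic := hQ ▸ monic_prod_of_monic _ _ fun i _ => monic_X_sub_C _
  have hqd : q.natDegree = r := by
    rw [hq, natDegree_prod_of_monic _ _ fun i _ => monic_X_sub_C _]
    simp
  have hQd : Q.natDegree = r := by
    rw [hQ, natDegree_prod_of_monic _ _ fun i _ => monic_X_sub_C _]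
    simp
  have hdeg : (q - Q).degree < (#(Finset.univ : Finset (Fin r)) : WithBot ℕ) := by
    have h1 : (q - Q).degree < q.degree := by
      apply degree_sub_lt
      · rw [degree_eq_natDegree hqm.ne_zero, degree_eq_natDegree hQm.ne_zero, hqd, hQd]
      · exact hqm.ne_zero
      · rw [hqm.leadingCoeff, hQm.leadingCoeff]
    calc (q - Q).degree < q.degree := h1
      _ = (r : WithBot ℕ) := by rw [degree_eq_natDegree hqm.ne_zero, hqd]
      _ = (#(Finset.univ : Finset (Fin r)) : WithBot ℕ) := by rw [hcard]
  have hinterp : q - Q = Lagrange.interpolate Finset.univ x (fun i => q.eval (x i)) := by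
    apply Lagrange.eq_interpolate_of_eval_eq _ hinj hdeg
    intro i _
    rw [eval_sub, hQn, Lagrange.eval_nodal_at_node (Finset.mem_univ i), sub_zero]
  -- partial fraction identity at z
  have hA := Lagrange.eval_interpolate_not_at_node (s := Finset.univ) (v := x) (x := z)
      (fun i => q.eval (x i)) (fun i _ => hroot' i)
  rw [← hinterp, eval_sub, ← hQn] at hA
  -- sum of residues
  have hnodalcoeff : ∀ i : Fin r, (Lagrange.nodal (Finset.univ.erase i) x).coeff (r - 1) = 1 := by
    intro i
    have hm : (Lagrange.nodal (Finset.univ.erase i) x).natDegree = r - 1 := by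
      rw [Lagrange.natDegree_nodal, Finset.card_erase_of_mem (Finset.mem_univ i), hcard]
    rw [← hm]
    exact Lagrange.nodal_monic.coeff_natDegree
  have h2 : (q - Q).coeff (r - 1)
      = ∑ i, q.eval (x i) * Lagrange.nodalWeight Finset.univ x i := by
    rw [hinterp, Lagrange.interpolate_apply, Polynomial.finset_sum_coeff]
    refine Finset.sum_congr rfl fun i _ => ?_
    rw [Polynomial.coeff_C_mul,
      Lagrange.basis_eq_prod_sub_inv_mul_nodal_div (Finset.mem_univ i),
      ← Lagrange.nodal_erase_eq_nodal_div (Finset.mem_univ i),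
      Polynomial.coeff_C_mul, hnodalcoeff i, mul_one]
  have h1 : (q - Q).coeff (r - 1) = S := by
    have h1a := prod_X_sub_C_coeff_card_pred Finset.univ α hpos
    have h1b := prod_X_sub_C_coeff_card_pred Finset.univ x hpos
    rw [hcard] at h1a h1b
    rw [Polynomial.coeff_sub, hq, hQ, h1a, h1b, hS]
    simp only [hx]
    rw [Finset.sum_add_distrib]
    ring
  have hB : ∑ i, q.eval (x i) * Lagrange.nodalWeight Finset.univ x i = S := by
    rw [← h2, h1]
  -- final computation
  rw [hδ]
  have hgoal : ∀ j, x j * q.eval (x j) / Q.derivative.eval (x j) / (S + (n j : ℝ) + α j + β)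
      = x j * q.eval (x j) * Lagrange.nodalWeight Finset.univ x j / (S + x j + β) := by
    intro j
    rw [← hw' j, div_inv_eq_mul,
      show S + (n j : ℝ) + α j + β = S + x j + β from by simp only [hx]; ring]
  rw [Finset.sum_congr rfl fun j _ => hgoal j]
  have hterm : ∀ j, x j * q.eval (x j) * Lagrange.nodalWeight Finset.univ x j / (S + x j + β)
      - (S + β) * (Lagrange.nodalWeight Finset.univ x j * (z - x j)⁻¹ * q.eval (x j))
      = q.eval (x j) * Lagrange.nodalWeight Finset.univ x j := by
    intro j
    have h := mul_inv_cancel₀ (hd2 j)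
    rw [show z - x j = -(S + x j + β) from by rw [hz]; ring, inv_neg, div_eq_mul_inv]
    linear_combination q.eval (x j) * Lagrange.nodalWeight Finset.univ x j * h
  have hsum : ∑ j, (x j * q.eval (x j) * Lagrange.nodalWeight Finset.univ x j / (S + x j + β)
      - (S + β) * (Lagrange.nodalWeight Finset.univ x j * (z - x j)⁻¹ * q.eval (x j))) = S := by
    rw [Finset.sum_congr rfl fun j _ => hterm j]
    exact hB
  rw [Finset.sum_sub_distrib, ← Finset.mul_sum] at hsum
  have hqz : q.eval z = Q.eval z
      + Q.eval z * ∑ i, Lagrange.nodalWeight Finset.univ x i * (z - x i)⁻¹ * q.eval (x i) := by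
    linarith [hA]
  have hdiv : (Q.eval z + Q.eval z
      * ∑ i, Lagrange.nodalWeight Finset.univ x i * (z - x i)⁻¹ * q.eval (x i)) / Q.eval z
      = 1 + ∑ i, Lagrange.nodalWeight Finset.univ x i * (z - x i)⁻¹ * q.eval (x i) := by
    rw [div_eq_iff hQz]; ring
  rw [hqz, mul_div_assoc, hdiv]
  linear_combination hsum
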